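/- Let R be an associative unital ring and let C_* be a chain complex of left R-modules with C_k = 0 for k < 0 and for k > N (for some natural number N). If the identity chain map of C_* is chain homotopic to the zero chain map (i.e., there exist R-linear maps h_k : C_k → C_{k+1} with d_{k+1} ∘ h_k + h_{k−1} ∘ d_k = id_{C_k} for all k), then there is an isomorphism of R-modules ⨁_{k even} C_k ≅ ⨁_{k odd} C_k. -/

import Mathlib

universe u

set_option linter.unusedSectionVars false

namespace WallAux

variable {R : Type u} [Ring R] {C : ℕ → Type u} [∀ k, AddCommGroup (C k)] [∀ k, Module R (C k)]

/-- component maps of `d + h` from the even part to the odd part -/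
def Fc (d : ∀ k, C (k + 1) →ₗ[R] C k) (h : ∀ k, C k →ₗ[R] C (k + 1)) :
    ∀ i, C (2 * i) →ₗ[R] DirectSum ℕ fun j => C (2 * j + 1)
  | 0 => (DirectSum.lof R ℕ (fun j => C (2 * j + 1)) 0).comp (h 0)
  | (j + 1) => (DirectSum.lof R ℕ (fun j => C (2 * j + 1)) (j + 1)).comp (h (2 * j + 2))
      + (DirectSum.lof R ℕ (fun j => C (2 * j + 1)) j).comp (d (2 * j + 1))

/-- component maps of `d + h` from the odd part to the even part -/
def Gc (d : ∀ k, C (k + 1) →ₗ[R] C k) (h : ∀ k, C k →ₗ[R] C (k + 1)) (i : ℕ) :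
    C (2 * i + 1) →ₗ[R] DirectSum ℕ fun j => C (2 * j) :=
  (DirectSum.lof R ℕ (fun j => C (2 * j)) (i + 1)).comp (h (2 * i + 1))
    + (DirectSum.lof R ℕ (fun j => C (2 * j)) i).comp (d (2 * i))

def F (d : ∀ k, C (k + 1) →ₗ[R] C k) (h : ∀ k, C k →ₗ[R] C (k + 1)) :
    (DirectSum ℕ fun i => C (2 * i)) →ₗ[R] DirectSum ℕ fun i => C (2 * i + 1) :=
  DirectSum.toModule R ℕ _ (Fc d h)

def G (d : ∀ k, C (k + 1) →ₗ[R] C k) (h : ∀ k, C k →ₗ[R] C (k + 1)) :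
    (DirectSum ℕ fun i => C (2 * i + 1)) →ₗ[R] DirectSum ℕ fun i => C (2 * i) :=
  DirectSum.toModule R ℕ _ (Gc d h)

def KE (h : ∀ k, C k →ₗ[R] C (k + 1)) :
    (DirectSum ℕ fun i => C (2 * i)) →ₗ[R] DirectSum ℕ fun i => C (2 * i) :=
  DirectSum.toModule R ℕ _ (fun i =>
    (DirectSum.lof R ℕ (fun j => C (2 * j)) (i + 1)).comp ((h (2 * i + 1)).comp (h (2 * i))))

def KO (h : ∀ k, C k →ₗ[R] C (k + 1)) :
    (DirectSum ℕ fun i => C (2 * i + 1)) →ₗ[R] DirectSum ℕ fun i => C (2 * i + 1) :=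
  DirectSum.toModule R ℕ _ (fun i =>
    (DirectSum.lof R ℕ (fun j => C (2 * j + 1)) (i + 1)).comp
      ((h (2 * i + 2)).comp (h (2 * i + 1))))

lemma KE_lof (h : ∀ k, C k →ₗ[R] C (k + 1)) (i : ℕ) (x : C (2 * i)) :
    KE h (DirectSum.lof R ℕ (fun j => C (2 * j)) i x)
      = DirectSum.lof R ℕ (fun j => C (2 * j)) (i + 1) (h (2 * i + 1) (h (2 * i) x)) := by
  rw [KE, DirectSum.toModule_lof]; rfl

lemma KO_lof (h : ∀ k, C k →ₗ[R] C (k + 1)) (i : ℕ) (x : C (2 * i + 1)) :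
    KO h (DirectSum.lof R ℕ (fun j => C (2 * j + 1)) i x)
      = DirectSum.lof R ℕ (fun j => C (2 * j + 1)) (i + 1)
          (h (2 * i + 2) (h (2 * i + 1) x)) := by
  rw [KO, DirectSum.toModule_lof]; rfl

variable (d : ∀ k, C (k + 1) →ₗ[R] C k)
    (hdd : ∀ k, (d k).comp (d (k + 1)) = 0)
    (h : ∀ k, C k →ₗ[R] C (k + 1))
    (hh0 : (d 0).comp (h 0) = LinearMap.id)
    (hhk : ∀ k, (d (k + 1)).comp (h (k + 1)) + (h k).comp (d k) = LinearMap.id)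

include hdd hh0 hhk

lemma GF : (G d h).comp (F d h) = LinearMap.id + KE h := by
  have hhk' : ∀ k (y : C (k + 1)),
      d (k + 1) (h (k + 1) y) + h k (d k y) = y := fun k y => by
    simpa using LinearMap.congr_fun (hhk k) y
  have hh0' : ∀ y : C 0, d 0 (h 0 y) = y := fun y => by
    simpa using LinearMap.congr_fun hh0 y
  have hdd' : ∀ k (y : C (k + 2)), d k (d (k + 1) y) = 0 := fun k y => by
    simpa using LinearMap.congr_fun (hdd k) y
  apply DirectSum.linearMap_ext
  intro i
  ext x : 1
  simp only [LinearMap.comp_apply, LinearMap.add_apply, LinearMap.id_apply]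
  rw [F, DirectSum.toModule_lof, KE_lof]
  match i, x with
  | 0, x =>
    simp only [Fc, LinearMap.comp_apply]
    rw [G, DirectSum.toModule_lof]
    simp only [Gc, LinearMap.add_apply, LinearMap.comp_apply]
    rw [hh0' x]
    abel
  | (j + 1), x =>
    simp only [Fc, LinearMap.add_apply, LinearMap.comp_apply, map_add]
    rw [G, DirectSum.toModule_lof, DirectSum.toModule_lof]
    simp only [Gc, LinearMap.add_apply, LinearMap.comp_apply]
    show DirectSum.lof R ℕ (fun j => C (2 * j)) (j + 2)
          (h (2 * j + 2 + 1) (h (2 * j + 2) x))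
        + DirectSum.lof R ℕ (fun j => C (2 * j)) (j + 1)
          (d (2 * j + 1 + 1) (h (2 * j + 1 + 1) x))
        + (DirectSum.lof R ℕ (fun j => C (2 * j)) (j + 1)
            (h (2 * j + 1) (d (2 * j + 1) x))
          + DirectSum.lof R ℕ (fun j => C (2 * j)) j (d (2 * j) (d (2 * j + 1) x)))
      = DirectSum.lof R ℕ (fun j => C (2 * j)) (j + 1) x
        + DirectSum.lof R ℕ (fun j => C (2 * j)) (j + 2)
            (h (2 * j + 2 + 1) (h (2 * j + 2) x))
    rw [hdd' (2 * j) x, map_zero, add_zero, add_assoc,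
      ← map_add (DirectSum.lof R ℕ (fun j => C (2 * j)) (j + 1)), hhk' (2 * j + 1) x]
    abel

lemma FG : (F d h).comp (G d h) = LinearMap.id + KO h := by
  have hhk' : ∀ k (y : C (k + 1)),
      d (k + 1) (h (k + 1) y) + h k (d k y) = y := fun k y => by
    simpa using LinearMap.congr_fun (hhk k) y
  have hdd' : ∀ k (y : C (k + 2)), d k (d (k + 1) y) = 0 := fun k y => by
    simpa using LinearMap.congr_fun (hdd k) y
  apply DirectSum.linearMap_ext
  intro i
  ext x : 1
  simp only [LinearMap.comp_apply, LinearMap.add_apply, LinearMap.id_apply]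
  rw [G, DirectSum.toModule_lof, KO_lof]
  match i, x with
  | 0, x =>
    simp only [Gc, LinearMap.add_apply, LinearMap.comp_apply, map_add]
    rw [F, DirectSum.toModule_lof, DirectSum.toModule_lof]
    simp only [Fc, LinearMap.add_apply, LinearMap.comp_apply]
    show DirectSum.lof R ℕ (fun j => C (2 * j + 1)) 1 (h (0 + 1 + 1) (h (0 + 1) x))
        + DirectSum.lof R ℕ (fun j => C (2 * j + 1)) 0 (d (0 + 1) (h (0 + 1) x))
        + DirectSum.lof R ℕ (fun j => C (2 * j + 1)) 0 (h 0 (d 0 x))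
      = DirectSum.lof R ℕ (fun j => C (2 * j + 1)) 0 x
        + DirectSum.lof R ℕ (fun j => C (2 * j + 1)) 1 (h (0 + 1 + 1) (h (0 + 1) x))
    rw [add_assoc, ← map_add (DirectSum.lof R ℕ (fun j => C (2 * j + 1)) 0), hhk' 0 x]
    abel
  | (j + 1), x =>
    simp only [Gc, LinearMap.add_apply, LinearMap.comp_apply, map_add]
    rw [F, DirectSum.toModule_lof, DirectSum.toModule_lof]
    simp only [Fc, LinearMap.add_apply, LinearMap.comp_apply]
    show DirectSum.lof R ℕ (fun j => C (2 * j + 1)) (j + 2)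
          (h (2 * j + 4) (h (2 * j + 3) x))
        + DirectSum.lof R ℕ (fun j => C (2 * j + 1)) (j + 1)
          (d (2 * j + 2 + 1) (h (2 * j + 2 + 1) x))
        + (DirectSum.lof R ℕ (fun j => C (2 * j + 1)) (j + 1)
            (h (2 * j + 2) (d (2 * j + 2) x))
          + DirectSum.lof R ℕ (fun j => C (2 * j + 1)) j
              (d (2 * j + 1) (d (2 * j + 1 + 1) x)))
      = DirectSum.lof R ℕ (fun j => C (2 * j + 1)) (j + 1) x
        + DirectSum.lof R ℕ (fun j => C (2 * j + 1)) (j + 2)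
            (h (2 * j + 4) (h (2 * j + 3) x))
    rw [hdd' (2 * j + 1) x, map_zero, add_zero, add_assoc,
      ← map_add (DirectSum.lof R ℕ (fun j => C (2 * j + 1)) (j + 1)), hhk' (2 * j + 2) x]
    abel

omit hdd hh0 hhk in
lemma KE_nilpotent (N : ℕ) (hbdd : ∀ k, N < k → Subsingleton (C k)) :
    IsNilpotent (KE h : Module.End R (DirectSum ℕ fun i => C (2 * i))) := by
  refine ⟨N + 1, ?_⟩
  have key : ∀ m i (x : C (2 * i)), N < 2 * i + 2 * m →
      (KE h ^ m) (DirectSum.lof R ℕ (fun j => C (2 * j)) i x) = 0 := by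
    intro m
    induction m with
    | zero =>
      intro i x hi
      have : Subsingleton (C (2 * i)) := hbdd _ (by omega)
      have hx : x = 0 := Subsingleton.elim x 0
      rw [hx, map_zero, pow_zero, Module.End.one_apply]
    | succ m ih =>
      intro i x hi
      rw [pow_succ, Module.End.mul_apply, KE_lof]
      exact ih (i + 1) _ (by omega)
  apply DirectSum.linearMap_ext
  intro i
  ext x : 1
  simp only [LinearMap.comp_apply, LinearMap.zero_apply, LinearMap.zero_comp]
  exact key (N + 1) i x (by omega)

omit hdd hh0 hhk in
lemma KO_nilpotent (N : ℕ) (hbdd : ∀ k, N < k → Subsingleton (C k)) :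
    IsNilpotent (KO h : Module.End R (DirectSum ℕ fun i => C (2 * i + 1))) := by
  refine ⟨N + 1, ?_⟩
  have key : ∀ m i (x : C (2 * i + 1)), N < 2 * i + 1 + 2 * m →
      (KO h ^ m) (DirectSum.lof R ℕ (fun j => C (2 * j + 1)) i x) = 0 := by
    intro m
    induction m with
    | zero =>
      intro i x hi
      have : Subsingleton (C (2 * i + 1)) := hbdd _ (by omega)
      have hx : x = 0 := Subsingleton.elim x 0
      rw [hx, map_zero, pow_zero, Module.End.one_apply]
    | succ m ih =>
      intro i x hi
      rw [pow_succ, Module.End.mul_apply, KO_lof]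
      exact ih (i + 1) _ (by omega)
  apply DirectSum.linearMap_ext
  intro i
  ext x : 1
  simp only [LinearMap.comp_apply, LinearMap.zero_apply, LinearMap.zero_comp]
  exact key (N + 1) i x (by omega)

end WallAux

/-- The counting step at the end of Wall's Lemma 2.3 (Lemma 1.x of the paper): if a chain
complex of left `R`-modules vanishing in negative degrees and in degrees above `N` is
contractible (the identity is chain homotopic to zero via a contraction `h`, so that
`d_{k+1} ∘ h_k + h_{k-1} ∘ d_k = id` for all `k`, reading `d_1 ∘ h_0 = id` in degree `0`),
then `⨁_{k even} C_k ≅ ⨁_{k odd} C_k` as `R`-modules.  Here `d k : C (k+1) →ₗ[R] C k` is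
the differential `d_{k+1}`. -/
theorem even_part_linearEquiv_odd_part_of_contractible
    {R : Type u} [Ring R] {C : ℕ → Type u} [∀ k, AddCommGroup (C k)] [∀ k, Module R (C k)]
    (d : ∀ k, C (k + 1) →ₗ[R] C k)
    (hdd : ∀ k, (d k).comp (d (k + 1)) = 0)
    (N : ℕ) (hbdd : ∀ k, N < k → Subsingleton (C k))
    (h : ∀ k, C k →ₗ[R] C (k + 1))
    (hh0 : (d 0).comp (h 0) = LinearMap.id)
    (hhk : ∀ k, (d (k + 1)).comp (h (k + 1)) + (h k).comp (d k) = LinearMap.id) :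
    Nonempty ((DirectSum ℕ fun i => C (2 * i)) ≃ₗ[R] DirectSum ℕ fun i => C (2 * i + 1)) := by

  classical
  have hGF := WallAux.GF d hdd h hh0 hhk
  have hFG := WallAux.FG d hdd h hh0 hhk
  have hGFunit : IsUnit ((WallAux.G d h).comp (WallAux.F d h) :
      Module.End R (DirectSum ℕ fun i => C (2 * i))) := by
    rw [hGF]
    have := (WallAux.KE_nilpotent (h := h) (R := R) N hbdd).isUnit_one_add
    simpa [Module.End.one_eq_id] using this
  have hFGunit : IsUnit ((WallAux.F d h).comp (WallAux.G d h) :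
      Module.End R (DirectSum ℕ fun i => C (2 * i + 1))) := by
    rw [hFG]
    have := (WallAux.KO_nilpotent (h := h) (R := R) N hbdd).isUnit_one_add
    simpa [Module.End.one_eq_id] using this
  have hGFbij : Function.Bijective ((WallAux.G d h).comp (WallAux.F d h)) :=
    (Module.End.isUnit_iff _).mp hGFunit
  have hFGbij : Function.Bijective ((WallAux.F d h).comp (WallAux.G d h)) :=
    (Module.End.isUnit_iff _).mp hFGunit
  have hFinj : Function.Injective (WallAux.F d h) := by
    intro a b hab
    have : ((WallAux.G d h).comp (WallAux.F d h)) a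
        = ((WallAux.G d h).comp (WallAux.F d h)) b := by
      simp [LinearMap.comp_apply, hab]
    exact hGFbij.injective this
  have hFsurj : Function.Surjective (WallAux.F d h) := fun y => by
    obtain ⟨x, hx⟩ := hFGbij.surjective y
    exact ⟨WallAux.G d h x, hx⟩
  exact ⟨LinearEquiv.ofBijective _ ⟨hFinj, hFsurj⟩⟩
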